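/- (Proposition 4 / characterization of no-regret play) Let (a^t)_{t≥1} be a sequence of action profiles in a finite game Γ, ξ^t the empirical distribution of play up to time t, and K_i^t(a_i, ã_i) = ξ_i^t(a_i) · [V_i({(ξ_{-i}^t(a_{-i}|a_i), x_i(ã_i,a_{-i}))}) − V_i({(ξ_{-i}^t(a_{-i}|a_i), x_i(a_i,a_{-i}))})] the CPT regret. Then limsup_{t→∞} K_i^t(a_i,ã_i) ≤ 0 for every player i and every pair a_i ≠ ã_i if and only if ξ^t converges to the set C(Γ) of CPT correlated equilibria (i.e., d(ξ^t, C(Γ)) → 0). -/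

import Mathlib

open Finset

section

variable {ι : Type*} [Fintype ι] [DecidableEq ι]

/-- Combine an action `ai` of player `i` with an action profile `a` of the remaining
players into a full action profile. -/
def glue (A : ι → Type*) (i : ι) (ai : A i)
    (a : ∀ j : {j : ι // j ≠ i}, A j.1) (j : ι) : A j :=
  if h : j = i then cast (congrArg A h).symm ai else a ⟨j, h⟩

variable (A : ι → Type*) [∀ j, Fintype (A j)] [∀ j, DecidableEq (A j)]

/-- Marginal probability `μ_i(a_i)` of a joint distribution `μ` on action profiles. -/
noncomputable def marg (μ : (∀ j, A j) → ℝ) (i : ι) (ai : A i) : ℝ :=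
  ∑ a : ∀ j : {j : ι // j ≠ i}, A j.1, μ (glue A i ai a)

/-- Conditional distribution `μ_{-i}(·|a_i)` on opponents' action profiles
(by convention `0` when the marginal vanishes, since division by zero yields `0`). -/
noncomputable def condDist (μ : (∀ j, A j) → ℝ) (i : ι) (ai : A i) :
    (∀ j : {j : ι // j ≠ i}, A j.1) → ℝ :=
  fun a => μ (glue A i ai a) / marg A μ i ai

variable (x : ∀ i, (∀ j, A j) → ℝ)
variable (V : ∀ i, ((∀ j : {j : ι // j ≠ i}, A j.1) → ℝ) →
  ((∀ j : {j : ι // j ≠ i}, A j.1) → ℝ) → ℝ)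

/-- The outcome profile of the lottery faced by player `i` when she plays `ai`:
her payoff as a function of the opponents' action profile. -/
def outcome (i : ι) (ai : A i) : (∀ j : {j : ι // j ≠ i}, A j.1) → ℝ :=
  fun a => x i (glue A i ai a)

/-- `C(Γ, i, a_i)` : distributions `π` on opponents' profiles for which `a_i` is a
CPT best response of player `i`, i.e. `V_i(L_i(π, a_i)) ≥ V_i(L_i(π, ã_i))` for all `ã_i`. -/
def CEia (i : ι) (ai : A i) : Set ((∀ j : {j : ι // j ≠ i}, A j.1) → ℝ) :=
  {π | π ∈ stdSimplex ℝ (∀ j : {j : ι // j ≠ i}, A j.1) ∧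
    ∀ bi : A i, V i π (outcome A x i bi) ≤ V i π (outcome A x i ai)}

/-- `C(Γ, i)` : joint distributions all of whose conditionals given a supported action
`a_i` of player `i` lie in `C(Γ, i, a_i)`. -/
noncomputable def CEi (i : ι) : Set ((∀ j, A j) → ℝ) :=
  {μ | μ ∈ stdSimplex ℝ (∀ j, A j) ∧
    ∀ ai : A i, 0 < marg A μ i ai → condDist A μ i ai ∈ CEia A x V i ai}

/-- `C(Γ)` : the set of CPT correlated equilibria of the game. -/
noncomputable def CE : Set ((∀ j, A j) → ℝ) :=
  {μ | μ ∈ stdSimplex ℝ (∀ j, A j) ∧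
    ∀ i, ∀ ai : A i, 0 < marg A μ i ai → ∀ bi : A i,
      V i (condDist A μ i ai) (outcome A x i bi) ≤ V i (condDist A μ i ai) (outcome A x i ai)}

/-- The empirical distribution of the action play `aseq` up to step `t`. -/
noncomputable def emp (aseq : ℕ → (∀ j, A j)) (t : ℕ) : (∀ j, A j) → ℝ :=
  fun s => (∑ τ ∈ Finset.range t, if aseq τ = s then (1 : ℝ) else 0) / (t : ℝ)

/-- The CPT regret `K_i^t(a_i, ã_i)` of player `i` at step `t` for having played
`a_i` instead of `ã_i`. -/
noncomputable def cptRegret (aseq : ℕ → (∀ j, A j)) (i : ι) (t : ℕ) (ai ati : A i) : ℝ :=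
  marg A (emp A aseq t) i ai *
    (V i (condDist A (emp A aseq t) i ai) (outcome A x i ati) -
     V i (condDist A (emp A aseq t) i ai) (outcome A x i ai))

/-! ### Auxiliary lemmas -/

lemma glue_injective (i : ι) (ai : A i) : Function.Injective (glue A i ai) := by
  intro a b h
  funext j
  have hj := congrFun h j.1
  simpa [glue, j.2] using hj

lemma marg_continuous (i : ι) (ai : A i) :
    Continuous fun μ : (∀ j, A j) → ℝ => marg A μ i ai := by
  unfold marg
  exact continuous_finset_sum _ fun a _ => continuous_apply _

lemma marg_nonneg {μ : (∀ j, A j) → ℝ} (hμ : μ ∈ stdSimplex ℝ (∀ j, A j)) (i : ι) (ai : A i) :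
    0 ≤ marg A μ i ai :=
  Finset.sum_nonneg fun a _ => hμ.1 _

lemma marg_le_one {μ : (∀ j, A j) → ℝ} (hμ : μ ∈ stdSimplex ℝ (∀ j, A j)) (i : ι) (ai : A i) :
    marg A μ i ai ≤ 1 := by
  have h1 : marg A μ i ai = ∑ s ∈ Finset.univ.image (glue A i ai), μ s :=
    (Finset.sum_image fun a _ b _ h => glue_injective A i ai h).symm
  rw [h1, ← hμ.2]
  exact Finset.sum_le_sum_of_subset_of_nonneg (Finset.subset_univ _) fun s _ _ => hμ.1 s

lemma condDist_mem {μ : (∀ j, A j) → ℝ} (hμ : μ ∈ stdSimplex ℝ (∀ j, A j)) {i : ι} {ai : A i}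
    (h : 0 < marg A μ i ai) :
    condDist A μ i ai ∈ stdSimplex ℝ (∀ j : {j : ι // j ≠ i}, A j.1) := by
  constructor
  · intro a
    exact div_nonneg (hμ.1 _) h.le
  · show ∑ a : ∀ j : {j : ι // j ≠ i}, A j.1, μ (glue A i ai a) / marg A μ i ai = 1
    rw [← Finset.sum_div]
    exact div_self h.ne'

lemma condDist_continuousAt {i : ι} {ai : A i} {μ : (∀ j, A j) → ℝ}
    (h : marg A μ i ai ≠ 0) :
    ContinuousAt (fun ν => condDist A ν i ai) μ := by
  rw [continuousAt_pi]
  intro a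
  exact ((continuous_apply _).continuousAt).div ((marg_continuous A i ai).continuousAt) h

/-- The regret functional as a function of the joint distribution. -/
noncomputable def Kfun (i : ι) (ai ati : A i) (μ : (∀ j, A j) → ℝ) : ℝ :=
  marg A μ i ai *
    (V i (condDist A μ i ai) (outcome A x i ati) -
     V i (condDist A μ i ai) (outcome A x i ai))

lemma Kfun_continuousAt
    (hV : ∀ (i : ι) (z : (∀ j : {j : ι // j ≠ i}, A j.1) → ℝ),
      Continuous (fun π => V i π z))
    {i : ι} {ai ati : A i} {μ : (∀ j, A j) → ℝ} (h : marg A μ i ai ≠ 0) :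
    ContinuousAt (Kfun A x V i ai ati) μ := by
  apply ContinuousAt.mul (marg_continuous A i ai).continuousAt
  exact (((hV i _).continuousAt).comp (condDist_continuousAt A h)).sub
    (((hV i _).continuousAt).comp (condDist_continuousAt A h))

lemma Kfun_nonpos_of_CE {ν : (∀ j, A j) → ℝ} {i : ι} {ai ati : A i}
    (hν : ν ∈ CE A x V) : Kfun A x V i ai ati ν ≤ 0 := by
  rcases (marg_nonneg A hν.1 i ai).eq_or_lt with h | h
  · simp [Kfun, ← h]
  · exact mul_nonpos_of_nonneg_of_nonpos h.le (sub_nonpos.2 (hν.2 i ai h ati))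

lemma Kfun_abs_le {i : ι} {ai ati : A i} {μ : (∀ j, A j) → ℝ} {C1 C2 : ℝ}
    (hμ : μ ∈ stdSimplex ℝ (∀ j, A j))
    (hC1 : ∀ π ∈ stdSimplex ℝ (∀ j : {j : ι // j ≠ i}, A j.1),
      |V i π (outcome A x i ati)| ≤ C1)
    (hC2 : ∀ π ∈ stdSimplex ℝ (∀ j : {j : ι // j ≠ i}, A j.1),
      |V i π (outcome A x i ai)| ≤ C2) :
    |Kfun A x V i ai ati μ| ≤ marg A μ i ai * (C1 + C2) := by
  rcases (marg_nonneg A hμ i ai).eq_or_lt with h | h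
  · simp [Kfun, ← h]
  · have hcond := condDist_mem A hμ h
    rw [Kfun, abs_mul, abs_of_pos h]
    refine mul_le_mul_of_nonneg_left ((abs_sub _ _).trans ?_) h.le
    exact add_le_add (hC1 _ hcond) (hC2 _ hcond)

lemma emp_zero (aseq : ℕ → (∀ j, A j)) : emp A aseq 0 = fun _ => 0 := by
  funext s
  simp [emp]

lemma emp_mem (aseq : ℕ → (∀ j, A j)) {t : ℕ} (ht : 1 ≤ t) :
    emp A aseq t ∈ stdSimplex ℝ (∀ j, A j) := by
  have ht' : (t : ℝ) ≠ 0 := Nat.cast_ne_zero.2 (by omega)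
  constructor
  · intro s
    apply div_nonneg _ (Nat.cast_nonneg t)
    exact Finset.sum_nonneg fun τ _ => by positivity
  · show ∑ s, emp A aseq t s = 1
    unfold emp
    rw [← Finset.sum_div, Finset.sum_comm]
    have h1 : ∀ τ, ∑ s : (∀ j, A j), (if aseq τ = s then (1 : ℝ) else 0) = 1 := fun τ => by
      simp
    simp only [h1, Finset.sum_const, Finset.card_range, nsmul_eq_mul, mul_one]
    exact div_self ht'

lemma cptRegret_eq (aseq : ℕ → (∀ j, A j)) (i : ι) (t : ℕ) (ai ati : A i) :
    cptRegret A x V aseq i t ai ati = Kfun A x V i ai ati (emp A aseq t) := rfl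

lemma cptRegret_abs_le {i : ι} {ai ati : A i} {C1 C2 : ℝ} (aseq : ℕ → (∀ j, A j))
    (hC1 : ∀ π ∈ stdSimplex ℝ (∀ j : {j : ι // j ≠ i}, A j.1),
      |V i π (outcome A x i ati)| ≤ C1)
    (hC2 : ∀ π ∈ stdSimplex ℝ (∀ j : {j : ι // j ≠ i}, A j.1),
      |V i π (outcome A x i ai)| ≤ C2)
    (t : ℕ) :
    |cptRegret A x V aseq i t ai ati| ≤ max 0 (C1 + C2) := by
  rcases Nat.eq_zero_or_pos t with rfl | ht
  · have h0 : marg A (emp A aseq 0) i ai = 0 := by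
      simp [marg, emp_zero]
    rw [cptRegret_eq, Kfun, h0, zero_mul, abs_zero]
    exact le_max_left _ _
  · have hμ := emp_mem A aseq ht
    rw [cptRegret_eq]
    rcases (marg_nonneg A hμ i ai).eq_or_lt with h | h
    · rw [Kfun, ← h, zero_mul, abs_zero]
      exact le_max_left _ _
    · have hcond := condDist_mem A hμ h
      have hCpos : 0 ≤ C1 + C2 :=
        add_nonneg ((abs_nonneg _).trans (hC1 _ hcond)) ((abs_nonneg _).trans (hC2 _ hcond))
      refine (Kfun_abs_le A x V hμ hC1 hC2).trans (le_trans ?_ (le_max_right _ _))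
      calc marg A (emp A aseq t) i ai * (C1 + C2) ≤ 1 * (C1 + C2) :=
            mul_le_mul_of_nonneg_right (marg_le_one A hμ i ai) hCpos
        _ = C1 + C2 := one_mul _

/-- Proposition 4: all CPT regrets have nonpositive limsup if and only if
the empirical distribution of play converges to the set `C(Γ)` of CPT correlated
equilibria. -/
theorem limsup_regret_nonpos_iff_emp_tendsto_CE
    (hV : ∀ (i : ι) (z : (∀ j : {j : ι // j ≠ i}, A j.1) → ℝ),
      Continuous (fun π => V i π z))
    (hne : (CE A x V).Nonempty)
    (aseq : ℕ → (∀ j, A j)) :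
    (∀ (i : ι) (ai ati : A i), ai ≠ ati →
      Filter.limsup (fun t => cptRegret A x V aseq i t ai ati) Filter.atTop ≤ 0) ↔
    Filter.Tendsto (fun t => Metric.infDist (emp A aseq t) (CE A x V))
      Filter.atTop (nhds 0) := by
  classical
  constructor
  · -- regrets nonpositive ⇒ convergence to CE
    intro hreg
    by_contra hcon
    rw [Metric.tendsto_atTop] at hcon
    push_neg at hcon
    obtain ⟨ε, hε, hfreq⟩ := hcon
    have hfr : ∃ᶠ n in Filter.atTop,
        ε ≤ Metric.infDist (emp A aseq n) (CE A x V) ∧ 1 ≤ n := by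
      rw [Filter.frequently_atTop]
      intro N
      obtain ⟨n, hn, hd⟩ := hfreq (max N 1)
      refine ⟨n, le_trans (le_max_left _ _) hn, ?_, le_trans (le_max_right _ _) hn⟩
      rwa [Real.dist_eq, sub_zero, abs_of_nonneg Metric.infDist_nonneg] at hd
    obtain ⟨φ, hφ, hφP⟩ := Filter.extraction_of_frequently_atTop hfr
    obtain ⟨μ, hμ, ψ, hψ, hconv⟩ :=
      (isCompact_stdSimplex (𝕜 := ℝ) (ι := ∀ j, A j)).tendsto_subseq
        (x := fun k => emp A aseq (φ k)) (fun k => emp_mem A aseq (hφP k).2)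
    have hinf2 : Filter.Tendsto (fun k => Metric.infDist (emp A aseq (φ (ψ k))) (CE A x V))
        Filter.atTop (nhds (Metric.infDist μ (CE A x V))) :=
      ((Metric.continuous_infDist_pt _).tendsto μ).comp hconv
    have hεμ : ε ≤ Metric.infDist μ (CE A x V) :=
      ge_of_tendsto' hinf2 fun k => (hφP (ψ k)).1
    have hμnot : μ ∉ CE A x V := fun hmem => by
      rw [Metric.infDist_zero_of_mem hmem] at hεμ
      exact absurd hεμ (not_le.2 hε)
    have hnot : ¬ ∀ i, ∀ ai : A i, 0 < marg A μ i ai → ∀ bi : A i,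
        V i (condDist A μ i ai) (outcome A x i bi) ≤
          V i (condDist A μ i ai) (outcome A x i ai) := fun h => hμnot ⟨hμ, h⟩
    push_neg at hnot
    obtain ⟨i, ai, hm, bi, hlt⟩ := hnot
    have hne' : ai ≠ bi := fun h => by rw [h] at hlt; exact lt_irrefl _ hlt
    set c := Kfun A x V i ai bi μ with hc_def
    have hc : 0 < c := mul_pos hm (sub_pos.2 hlt)
    have hKconv : Filter.Tendsto (fun k => Kfun A x V i ai bi (emp A aseq (φ (ψ k))))
        Filter.atTop (nhds c) :=
      ((Kfun_continuousAt A x V hV hm.ne').tendsto).comp hconv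
    have hev : ∀ᶠ k in Filter.atTop, c / 2 < Kfun A x V i ai bi (emp A aseq (φ (ψ k))) :=
      hKconv.eventually (eventually_gt_nhds (half_lt_self hc))
    have hσtop : Filter.Tendsto (fun k => φ (ψ k)) Filter.atTop Filter.atTop :=
      (hφ.comp hψ).tendsto_atTop
    have hfr2 : ∃ᶠ t in Filter.atTop, c / 2 ≤ cptRegret A x V aseq i t ai bi :=
      hσtop.frequently ((hev.mono fun k hk => hk.le).frequently)
    obtain ⟨C1, hC1⟩ := (isCompact_stdSimplex (𝕜 := ℝ) (ι := ∀ j : {j : ι // j ≠ i}, A j.1)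
      ).exists_bound_of_continuousOn (hV i (outcome A x i bi)).continuousOn
    obtain ⟨C2, hC2⟩ := (isCompact_stdSimplex (𝕜 := ℝ) (ι := ∀ j : {j : ι // j ≠ i}, A j.1)
      ).exists_bound_of_continuousOn (hV i (outcome A x i ai)).continuousOn
    have hb : Filter.IsBoundedUnder (· ≤ ·) Filter.atTop
        (fun t => cptRegret A x V aseq i t ai bi) :=
      ⟨max 0 (C1 + C2), Filter.eventually_map.2 (Filter.Eventually.of_forall fun t =>
        (abs_le.1 (cptRegret_abs_le A x V aseq hC1 hC2 t)).2)⟩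
    have hlim : c / 2 ≤ Filter.limsup (fun t => cptRegret A x V aseq i t ai bi) Filter.atTop :=
      Filter.le_limsup_of_frequently_le hfr2 hb
    have := hreg i ai bi hne'
    linarith [half_pos hc]
  · -- convergence to CE ⇒ regrets nonpositive
    intro htend i ai ati hne'
    obtain ⟨C1, hC1⟩ := (isCompact_stdSimplex (𝕜 := ℝ) (ι := ∀ j : {j : ι // j ≠ i}, A j.1)
      ).exists_bound_of_continuousOn (hV i (outcome A x i ati)).continuousOn
    obtain ⟨C2, hC2⟩ := (isCompact_stdSimplex (𝕜 := ℝ) (ι := ∀ j : {j : ι // j ≠ i}, A j.1)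
      ).exists_bound_of_continuousOn (hV i (outcome A x i ai)).continuousOn
    by_contra hL
    push_neg at hL
    set L := Filter.limsup (fun t => cptRegret A x V aseq i t ai ati) Filter.atTop with hLdef
    have hcob : Filter.IsCoboundedUnder (· ≤ ·) Filter.atTop
        (fun t => cptRegret A x V aseq i t ai ati) :=
      Filter.isCoboundedUnder_le_of_le _ fun t =>
        (abs_le.1 (cptRegret_abs_le A x V aseq hC1 hC2 t)).1
    have hfr : ∃ᶠ t in Filter.atTop, L / 2 < cptRegret A x V aseq i t ai ati :=
      Filter.frequently_lt_of_lt_limsup hcob (half_lt_self hL)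
    have hfr' : ∃ᶠ t in Filter.atTop,
        L / 2 < cptRegret A x V aseq i t ai ati ∧ 1 ≤ t :=
      hfr.and_eventually (Filter.eventually_ge_atTop 1)
    obtain ⟨φ, hφ, hφP⟩ := Filter.extraction_of_frequently_atTop hfr'
    obtain ⟨μ, hμ, ψ, hψ, hconv⟩ :=
      (isCompact_stdSimplex (𝕜 := ℝ) (ι := ∀ j, A j)).tendsto_subseq
        (x := fun k => emp A aseq (φ k)) (fun k => emp_mem A aseq (hφP k).2)
    have hσtop : Filter.Tendsto (fun k => φ (ψ k)) Filter.atTop Filter.atTop :=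
      (hφ.comp hψ).tendsto_atTop
    have hinf0 : Filter.Tendsto (fun k => Metric.infDist (emp A aseq (φ (ψ k))) (CE A x V))
        Filter.atTop (nhds 0) := htend.comp hσtop
    have hinf2 : Filter.Tendsto (fun k => Metric.infDist (emp A aseq (φ (ψ k))) (CE A x V))
        Filter.atTop (nhds (Metric.infDist μ (CE A x V))) :=
      ((Metric.continuous_infDist_pt _).tendsto μ).comp hconv
    have hinfμ : Metric.infDist μ (CE A x V) = 0 := tendsto_nhds_unique hinf2 hinf0
    have hμcl : μ ∈ closure (CE A x V) := (Metric.mem_closure_iff_infDist_zero hne).2 hinfμ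
    obtain ⟨ν, hνmem, hνlim⟩ := mem_closure_iff_seq_limit.1 hμcl
    have hLhalf : 0 < L / 2 := half_pos hL
    rcases (marg_nonneg A hμ i ai).eq_or_lt with h0 | h0
    · -- marginal vanishes at the limit : regrets tend to 0, contradiction
      have hmconv : Filter.Tendsto (fun k => marg A (emp A aseq (φ (ψ k))) i ai)
          Filter.atTop (nhds 0) := by
        have := ((marg_continuous A i ai).tendsto μ).comp hconv
        rwa [← h0] at this
      have hmul : Filter.Tendsto (fun k => marg A (emp A aseq (φ (ψ k))) i ai * (C1 + C2))
          Filter.atTop (nhds 0) := by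
        simpa using hmconv.mul_const (C1 + C2)
      have hev : ∀ᶠ k in Filter.atTop,
          marg A (emp A aseq (φ (ψ k))) i ai * (C1 + C2) < L / 2 :=
        hmul.eventually (eventually_lt_nhds hLhalf)
      obtain ⟨k, hk⟩ := hev.exists
      have h1 : L / 2 < cptRegret A x V aseq i (φ (ψ k)) ai ati := (hφP (ψ k)).1
      have h2 : |cptRegret A x V aseq i (φ (ψ k)) ai ati| ≤
          marg A (emp A aseq (φ (ψ k))) i ai * (C1 + C2) := by
        rw [cptRegret_eq]
        exact Kfun_abs_le A x V (emp_mem A aseq (hφP (ψ k)).2) hC1 hC2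
      have := (abs_le.1 h2).2
      linarith
    · -- positive marginal : regret is continuous at μ and nonpositive on closure of CE
      have hKconv : Filter.Tendsto (fun k => Kfun A x V i ai ati (emp A aseq (φ (ψ k))))
          Filter.atTop (nhds (Kfun A x V i ai ati μ)) :=
        ((Kfun_continuousAt A x V hV h0.ne').tendsto).comp hconv
      have hge : L / 2 ≤ Kfun A x V i ai ati μ :=
        ge_of_tendsto' hKconv fun k => ((hφP (ψ k)).1).le
      have hKν : Filter.Tendsto (fun n => Kfun A x V i ai ati (ν n))
          Filter.atTop (nhds (Kfun A x V i ai ati μ)) :=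
        ((Kfun_continuousAt A x V hV h0.ne').tendsto).comp hνlim
      have hKμ : Kfun A x V i ai ati μ ≤ 0 :=
        le_of_tendsto' hKν fun n => Kfun_nonpos_of_CE A x V (hνmem n)
      linarith

end
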